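/- Let λ0, λ1 > 0, ℓ0, ℓ1 ∈ ℝ and h0, h1 > 0. Set λ = (λ0+λ1)/2, μ = (λ0−λ1)/2, ℓ = (ℓ0+ℓ1)/2, m = (ℓ0−ℓ1)/2, D = √((m+μ)² + λ0 λ1 h0 h1) (which is strictly positive), and let 𝓛 be the 2×2 real matrix with rows (λ0+ℓ0, −λ0 h0) and (−λ1 h1, λ1+ℓ1). Then for every t ≥ 0 the vector exp(−t 𝓛) · (1,1)ᵀ has first component ½ e^{−(λ+ℓ)t} [ e^{tD} + e^{−tD} + ((λ0 h0 − μ − m)/D)(e^{tD} − e^{−tD}) ] and second component ½ e^{−(λ+ℓ)t} [ e^{tD} + e^{−tD} + ((λ1 h1 + μ + m)/D)(e^{tD} − e^{−tD}) ]. -/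

import Mathlib

open Matrix

/-- Auxiliary: explicit inverse pair for the eigenvector matrix. -/
lemma kac_aux_PQ (α β γ d : ℝ) (hdpos : 0 < d) (hβpos : 0 < β)
    (key : α ^ 2 + β * γ = d ^ 2) :
    (!![β, β; d - α, -(d + α)] : Matrix (Fin 2) (Fin 2) ℝ) *
      ((2 * β * d)⁻¹ • !![d + α, β; d - α, -β]) = 1 := by
  ext i j
  fin_cases i <;> fin_cases j <;>
    simp [Matrix.mul_apply, Fin.sum_univ_two, Matrix.one_apply] <;>
    (try field_simp) <;> (try tauto) <;> ring

lemma kac_aux_QP (α β γ d : ℝ) (hdpos : 0 < d) (hβpos : 0 < β)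
    (key : α ^ 2 + β * γ = d ^ 2) :
    ((2 * β * d)⁻¹ • !![d + α, β; d - α, -β] : Matrix (Fin 2) (Fin 2) ℝ) *
      !![β, β; d - α, -(d + α)] = 1 := by
  ext i j
  fin_cases i <;> fin_cases j <;>
    simp [Matrix.mul_apply, Fin.sum_univ_two, Matrix.one_apply] <;>
    (try field_simp) <;> (try tauto) <;> ring

/-- Auxiliary: the eigendecomposition identity. -/
lemma kac_aux_decomp (α β γ d c : ℝ) (hdpos : 0 < d) (hβpos : 0 < β)
    (key : α ^ 2 + β * γ = d ^ 2) :
    (!![c + α, β; γ, c - α] : Matrix (Fin 2) (Fin 2) ℝ)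
      = !![β, β; d - α, -(d + α)] * !![c + d, 0; 0, c - d] *
        ((2 * β * d)⁻¹ • !![d + α, β; d - α, -β]) := by
  ext i j
  fin_cases i
  · fin_cases j
    · simp [Matrix.mul_apply, Fin.sum_univ_two]
      field_simp
      ring
    · simp [Matrix.mul_apply, Fin.sum_univ_two]
      field_simp
      ring
  · fin_cases j
    · simp [Matrix.mul_apply, Fin.sum_univ_two]
      field_simp
      linear_combination 2 * d * key
    · simp [Matrix.mul_apply, Fin.sum_univ_two]
      field_simp
      ring

/-- Auxiliary: the final mulVec computation. -/
lemma kac_aux_mulVec (α β γ d E1 E2 : ℝ) (hdpos : 0 < d) (hβpos : 0 < β)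
    (key : α ^ 2 + β * γ = d ^ 2) :
    ((!![β, β; d - α, -(d + α)] : Matrix (Fin 2) (Fin 2) ℝ) *
        !![E1, 0; 0, E2] *
        ((2 * β * d)⁻¹ • !![d + α, β; d - α, -β])).mulVec ![1, 1]
      = ![ (1 / 2) * (E1 + E2 + ((β + α) / d) * (E1 - E2)),
           (1 / 2) * (E1 + E2 + ((γ - α) / d) * (E1 - E2)) ] := by
  funext i
  fin_cases i
  · simp [Matrix.mulVec, dotProduct, Fin.sum_univ_two, Matrix.mul_apply]
    field_simp
    ring
  · simp [Matrix.mulVec, dotProduct, Fin.sum_univ_two, Matrix.mul_apply]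
    field_simp
    linear_combination (-1) * (E1 - E2) * key

/-- Theorem 3.1 (computational content): explicit formula for `exp(−t𝓛)·(1,1)ᵀ`,
the Laplace transform of a Kac–Lévy process with jumps. -/
theorem kac_levy_jump_laplace_transform
    (l0 l1 e0 e1 h0 h1 : ℝ) (hl0 : 0 < l0) (hl1 : 0 < l1)
    (hh0 : 0 < h0) (hh1 : 0 < h1)
    (lam μ e m D : ℝ)
    (hlam : lam = (l0 + l1) / 2) (hμ : μ = (l0 - l1) / 2)
    (he : e = (e0 + e1) / 2) (hm : m = (e0 - e1) / 2)
    (hD : D = Real.sqrt ((m + μ) ^ 2 + l0 * l1 * h0 * h1))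
    (L : Matrix (Fin 2) (Fin 2) ℝ)
    (hL : L = !![l0 + e0, -(l0 * h0); -(l1 * h1), l1 + e1]) :
    0 < D ∧
    ∀ t : ℝ, 0 ≤ t →
      (NormedSpace.exp (-(t • L))).mulVec ![1, 1]
        = ![ (1 / 2) * Real.exp (-(lam + e) * t) *
              (Real.exp (t * D) + Real.exp (-(t * D))
                + ((l0 * h0 - μ - m) / D)
                    * (Real.exp (t * D) - Real.exp (-(t * D)))),
             (1 / 2) * Real.exp (-(lam + e) * t) *
              (Real.exp (t * D) + Real.exp (-(t * D))
                + ((l1 * h1 + μ + m) / D)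
                    * (Real.exp (t * D) - Real.exp (-(t * D)))) ] := by
  have harg : 0 < (m + μ) ^ 2 + l0 * l1 * h0 * h1 := by positivity
  have hDpos : 0 < D := by rw [hD]; exact Real.sqrt_pos.mpr harg
  have hD2 : D ^ 2 = (m + μ) ^ 2 + l0 * l1 * h0 * h1 := by
    rw [hD, Real.sq_sqrt harg.le]
  refine ⟨hDpos, ?_⟩
  intro t ht
  rcases eq_or_lt_of_le ht with h0t | h0t
  · subst h0t
    rw [zero_smul, neg_zero, NormedSpace.exp_zero, Matrix.one_mulVec]
    funext i
    fin_cases i <;> norm_num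
  · -- t > 0
    obtain ⟨α, hα⟩ : ∃ x : ℝ, x = -(t * (m + μ)) := ⟨_, rfl⟩
    obtain ⟨β, hβ⟩ : ∃ x : ℝ, x = t * (l0 * h0) := ⟨_, rfl⟩
    obtain ⟨γ, hγ⟩ : ∃ x : ℝ, x = t * (l1 * h1) := ⟨_, rfl⟩
    obtain ⟨d, hd⟩ : ∃ x : ℝ, x = t * D := ⟨_, rfl⟩
    obtain ⟨c, hc⟩ : ∃ x : ℝ, x = -(t * (lam + e)) := ⟨_, rfl⟩
    have hdpos : 0 < d := by rw [hd]; exact mul_pos h0t hDpos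
    have hβpos : 0 < β := by rw [hβ]; positivity
    have key : α ^ 2 + β * γ = d ^ 2 := by
      rw [hα, hβ, hγ, hd]
      have : (t * D) ^ 2 = t ^ 2 * D ^ 2 := by ring
      rw [this, hD2]; ring
    have hPQ := kac_aux_PQ α β γ d hdpos hβpos key
    have hQP := kac_aux_QP α β γ d hdpos hβpos key
    set P : Matrix (Fin 2) (Fin 2) ℝ := !![β, β; d - α, -(d + α)] with hP
    set Q : Matrix (Fin 2) (Fin 2) ℝ :=
      (2 * β * d)⁻¹ • !![d + α, β; d - α, -β] with hQ
    have hA : -(t • L) = !![c + α, β; γ, c - α] := by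
      rw [hL]
      ext i j
      fin_cases i <;> fin_cases j <;>
        simp [hα, hβ, hγ, hc, hlam, hμ, he, hm] <;> ring
    set U : (Matrix (Fin 2) (Fin 2) ℝ)ˣ := ⟨P, Q, hPQ, hQP⟩ with hU
    have hconj : -(t • L) = (U : Matrix (Fin 2) (Fin 2) ℝ) * !![c + d, 0; 0, c - d] * ((U⁻¹ : (Matrix (Fin 2) (Fin 2) ℝ)ˣ) : Matrix (Fin 2) (Fin 2) ℝ) := by
      show -(t • L) = P * !![c + d, 0; 0, c - d] * Q
      rw [hA]
      exact kac_aux_decomp α β γ d c hdpos hβpos key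
    have hdiag : (!![c + d, 0; 0, c - d] : Matrix (Fin 2) (Fin 2) ℝ)
        = Matrix.diagonal ![c + d, c - d] := by
      ext i j; fin_cases i <;> fin_cases j <;> simp
    have hexp : NormedSpace.exp (-(t • L))
        = (U : Matrix (Fin 2) (Fin 2) ℝ) * !![Real.exp (c + d), 0; 0, Real.exp (c - d)] * ((U⁻¹ : (Matrix (Fin 2) (Fin 2) ℝ)ˣ) : Matrix (Fin 2) (Fin 2) ℝ) := by
      rw [hconj, Matrix.exp_units_conj U, hdiag, Matrix.exp_diagonal]
      congr 2
      ext i j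
      fin_cases i <;> fin_cases j <;> simp [Real.exp_eq_exp_ℝ]
    rw [hexp]
    show (P * !![Real.exp (c + d), 0; 0, Real.exp (c - d)] * Q).mulVec ![1, 1] = _
    rw [hP, hQ, kac_aux_mulVec α β γ d (Real.exp (c + d)) (Real.exp (c - d))
      hdpos hβpos key]
    have hre1 : Real.exp (-(lam + e) * t) * Real.exp (t * D) = Real.exp (c + d) := by
      rw [← Real.exp_add, hc, hd]; ring_nf
    have hre2 : Real.exp (-(lam + e) * t) * Real.exp (-(t * D)) = Real.exp (c - d) := by
      rw [← Real.exp_add, hc, hd]; ring_nf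
    have hk0 : (l0 * h0 - μ - m) / D = (β + α) / d := by
      rw [hβ, hα, hd, div_eq_div_iff hDpos.ne' (mul_pos h0t hDpos).ne']
      ring
    have hk1 : (l1 * h1 + μ + m) / D = (γ - α) / d := by
      rw [hγ, hα, hd, div_eq_div_iff hDpos.ne' (mul_pos h0t hDpos).ne']
      ring
    funext i
    fin_cases i
    · show (1 / 2 : ℝ) * (Real.exp (c + d) + Real.exp (c - d)
          + ((β + α) / d) * (Real.exp (c + d) - Real.exp (c - d)))
        = (1 / 2) * Real.exp (-(lam + e) * t) *
            (Real.exp (t * D) + Real.exp (-(t * D))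
              + ((l0 * h0 - μ - m) / D)
                  * (Real.exp (t * D) - Real.exp (-(t * D))))
      rw [hk0, ← hre1, ← hre2]
      ring
    · show (1 / 2 : ℝ) * (Real.exp (c + d) + Real.exp (c - d)
          + ((γ - α) / d) * (Real.exp (c + d) - Real.exp (c - d)))
        = (1 / 2) * Real.exp (-(lam + e) * t) *
            (Real.exp (t * D) + Real.exp (-(t * D))
              + ((l1 * h1 + μ + m) / D)
                  * (Real.exp (t * D) - Real.exp (-(t * D))))
      rw [hk1, ← hre1, ← hre2]
      ring
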